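/- arXiv:1806.07473 — 2 statements merged into one kernel-verified Lean document; each statement's English description precedes it below -/
import Mathlib

section
/- Let A, B ∈ ℝ^{n×n} with A positive semidefinite, and ρ, ε > 0 satisfy 0 ≤ B ≤ ρA and ‖ρA − B‖ ≤ ε‖A‖. Then there exists c > 0 (depending only on A) such that B ≥ (ρ − εc)A. -/
open Matrix
open scoped Matrix.Norms.L2Operator

private lemma dot_eq_inner {n : ℕ} (a b : Fin n → ℝ) :
    a ⬝ᵥ b = inner ℝ ((WithLp.equiv 2 (Fin n → ℝ)).symm a)
      ((WithLp.equiv 2 (Fin n → ℝ)).symm b) := by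
  simp [PiLp.inner_apply, dotProduct, RCLike.inner_apply, mul_comm]

/-- For A positive semidefinite, there exists c > 0 depending only on A such that whenever
    0 ≤ B ≤ ρA and ‖ρA − B‖ ≤ ε‖A‖ (spectral norm), one has B ≥ (ρ − εc)A. -/
theorem psd_lower_bound_of_psd {n : ℕ}
    (A : Matrix (Fin n) (Fin n) ℝ) (hA : A.PosSemidef) :
    ∃ c > (0 : ℝ), ∀ (B : Matrix (Fin n) (Fin n) ℝ) (ρ ε : ℝ), 0 < ρ → 0 < ε →
      B.PosSemidef → (ρ • A - B).PosSemidef → ‖ρ • A - B‖ ≤ ε * ‖A‖ →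
      (B - (ρ - ε * c) • A).PosSemidef := by
  by_cases hA0 : A = 0
  · refine ⟨1, one_pos, fun B ρ ε hρ hε hB hM hnorm => ?_⟩
    subst hA0
    simpa using hB
  · have hH := hA.1
    set U : Matrix (Fin n) (Fin n) ℝ := (hH.eigenvectorUnitary : Matrix (Fin n) (Fin n) ℝ) with hUdef
    set e : Fin n → ℝ := hH.eigenvalues with hedef
    have hspec : A = U * diagonal e * star U := by
      have := hH.spectral_theorem
      rwa [RCLike.ofReal_real_eq_id, Function.id_comp] at this
    have hUU : star U * U = 1 := (Matrix.mem_unitaryGroup_iff').mp hH.eigenvectorUnitary.2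
    have hUU' : U * star U = 1 := (Matrix.mem_unitaryGroup_iff).mp hH.eigenvectorUnitary.2
    have henn : ∀ j, 0 ≤ e j := fun j => hA.eigenvalues_nonneg j
    set S : Finset (Fin n) := Finset.univ.filter (fun j => e j ≠ 0) with hSdef
    have hS : S.Nonempty := by
      by_contra h
      apply hA0
      have hz : ∀ j, e j = 0 := by
        intro j
        by_contra hj
        exact h ⟨j, by simp [hSdef, hj]⟩
      have : diagonal e = 0 := by
        ext i j
        by_cases hij : i = j <;> simp [diagonal, hij, hz]
      rw [hspec, this, mul_zero, zero_mul]
    set lam : ℝ := S.inf' hS e with hlamdef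
    have hlam : 0 < lam := by
      rw [hlamdef, Finset.lt_inf'_iff]
      intro j hj
      rw [hSdef, Finset.mem_filter] at hj
      exact (henn j).lt_of_ne (Ne.symm hj.2)
    have hlam_le : ∀ j ∈ S, lam ≤ e j := fun j hj => Finset.inf'_le e hj
    have hAnorm : 0 < ‖A‖ := norm_pos_iff.mpr hA0
    refine ⟨‖A‖ / lam, div_pos hAnorm hlam, fun B ρ ε hρ hε hB hM hnorm => ?_⟩
    set c : ℝ := ‖A‖ / lam with hcdef
    have hc : 0 < c := div_pos hAnorm hlam
    set M : Matrix (Fin n) (Fin n) ℝ := ρ • A - B with hMdef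
    -- star is transpose for real matrices
    have hstarU : star U = Uᵀ := by
      rw [Matrix.star_eq_conjTranspose, Matrix.conjTranspose_eq_transpose_of_trivial]
    -- dot product preserved by U
    have hdot : ∀ a b : Fin n → ℝ, (U *ᵥ a) ⬝ᵥ (U *ᵥ b) = a ⬝ᵥ b := by
      intro a b
      rw [dotProduct_comm, dotProduct_mulVec, ← Matrix.mulVec_transpose, ← hstarU,
        Matrix.mulVec_mulVec, hUU, Matrix.one_mulVec, dotProduct_comm]
    rw [posSemidef_iff_dotProduct_mulVec]
    constructor
    · have h1 : ((ρ - ε * c) • A).IsHermitian := by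
        unfold Matrix.IsHermitian
        rw [Matrix.conjTranspose_smul, hA.1.eq]
        congr 1
      exact hB.1.sub h1
    · intro x
      rw [star_trivial]
      set u : Fin n → ℝ := (star U) *ᵥ x with hudef
      have hx : U *ᵥ u = x := by
        rw [hudef, Matrix.mulVec_mulVec, hUU', Matrix.one_mulVec]
      set u1 : Fin n → ℝ := fun j => if e j ≠ 0 then u j else 0 with hu1def
      set u0 : Fin n → ℝ := fun j => if e j ≠ 0 then 0 else u j with hu0def
      have hu10 : u1 + u0 = u := by
        funext j
        by_cases hj : e j = 0 <;> simp [hu1def, hu0def, hj]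
      set y : Fin n → ℝ := U *ᵥ u1 with hydef
      set z : Fin n → ℝ := U *ᵥ u0 with hzdef
      have hxyz : y + z = x := by
        rw [hydef, hzdef, ← Matrix.mulVec_add, hu10, hx]
      -- A *ᵥ (U *ᵥ a) = U *ᵥ (diagonal e *ᵥ a)
      have hAU : ∀ a : Fin n → ℝ, A *ᵥ (U *ᵥ a) = U *ᵥ (diagonal e *ᵥ a) := by
        intro a
        rw [hspec]
        rw [Matrix.mulVec_mulVec, Matrix.mulVec_mulVec, mul_assoc, mul_assoc, hUU, mul_one]
      have hAz : A *ᵥ z = 0 := by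
        rw [hzdef, hAU]
        have : diagonal e *ᵥ u0 = 0 := by
          funext j
          by_cases hj : e j = 0 <;>
            simp [Matrix.mulVec_diagonal, hu0def, hj]
        rw [this, Matrix.mulVec_zero]
      -- quadratic form identities
      have hxAx : x ⬝ᵥ (A *ᵥ x) = ∑ j, u j * (e j * u j) := by
        rw [← hx, hAU, hdot]
        simp [dotProduct, Matrix.mulVec_diagonal, mul_comm]
      have hyy : y ⬝ᵥ y = ∑ j ∈ S, u j * u j := by
        rw [hydef, hdot]
        rw [dotProduct]
        rw [← Finset.sum_filter_add_sum_filter_not Finset.univ (fun j => e j ≠ 0)]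
        have h2 : ∑ j ∈ Finset.univ.filter (fun j => ¬ e j ≠ 0), u1 j * u1 j = 0 := by
          apply Finset.sum_eq_zero
          intro j hj
          rw [Finset.mem_filter] at hj
          simp [hu1def, hj.2]
        rw [h2, add_zero]
        apply Finset.sum_congr rfl
        intro j hj
        rw [Finset.mem_filter] at hj
        simp [hu1def, hj.2]
      have hyy_nonneg : 0 ≤ y ⬝ᵥ y := by
        rw [hyy]; exact Finset.sum_nonneg fun j _ => mul_self_nonneg _
      have hlamyy : lam * (y ⬝ᵥ y) ≤ x ⬝ᵥ (A *ᵥ x) := by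
        rw [hxAx, hyy, Finset.mul_sum]
        calc ∑ j ∈ S, lam * (u j * u j) ≤ ∑ j ∈ S, u j * (e j * u j) := by
              apply Finset.sum_le_sum
              intro j hj
              have h1 : lam ≤ e j := hlam_le j hj
              have : lam * (u j * u j) ≤ e j * (u j * u j) :=
                mul_le_mul_of_nonneg_right h1 (mul_self_nonneg _)
              linarith [this]
          _ ≤ ∑ j, u j * (e j * u j) := by
              apply Finset.sum_le_sum_of_subset_of_nonneg (Finset.filter_subset _ _)
              intro j _ _
              have := mul_nonneg (henn j) (mul_self_nonneg (u j))
              nlinarith [this]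
      -- M z = 0
      have hMherm : M.IsHermitian := hM.1
      have hzBz : 0 ≤ z ⬝ᵥ (B *ᵥ z) := by simpa using hB.dotProduct_mulVec_nonneg z
      have hzMz : 0 ≤ z ⬝ᵥ (M *ᵥ z) := by simpa using hM.dotProduct_mulVec_nonneg z
      have hzMz' : z ⬝ᵥ (M *ᵥ z) = - (z ⬝ᵥ (B *ᵥ z)) := by
        rw [hMdef, Matrix.sub_mulVec, dotProduct_sub, Matrix.smul_mulVec,
          dotProduct_smul, hAz]
        simp
      have hMz : M *ᵥ z = 0 := by
        have h0 : z ⬝ᵥ (M *ᵥ z) = 0 := le_antisymm (by rw [hzMz']; linarith) hzMz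
        have := (hM.dotProduct_mulVec_zero_iff z).mp (by simpa using h0)
        exact this
      -- x M x = y M y
      have hxMx : x ⬝ᵥ (M *ᵥ x) = y ⬝ᵥ (M *ᵥ y) := by
        rw [← hxyz, Matrix.mulVec_add, dotProduct_add, add_dotProduct, add_dotProduct, hMz]
        have hzMy : z ⬝ᵥ (M *ᵥ y) = 0 := by
          rw [dotProduct_mulVec, ← Matrix.mulVec_transpose]
          have hMt : Mᵀ = M := by
            rw [← Matrix.conjTranspose_eq_transpose_of_trivial, hMherm.eq]
          rw [hMt, hMz]
          simp
        simp [hzMy]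
      -- spectral norm bound
      have hyMy : y ⬝ᵥ (M *ᵥ y) ≤ ‖M‖ * (y ⬝ᵥ y) := by
        set yE := (WithLp.equiv 2 (Fin n → ℝ)).symm y with hyE
        have h1 : y ⬝ᵥ (M *ᵥ y) = inner ℝ yE ((WithLp.equiv 2 (Fin n → ℝ)).symm (M *ᵥ y)) :=
          dot_eq_inner y (M *ᵥ y)
        have h2 : inner ℝ yE ((WithLp.equiv 2 (Fin n → ℝ)).symm (M *ᵥ y)) ≤
            ‖yE‖ * ‖(WithLp.equiv 2 (Fin n → ℝ)).symm (M *ᵥ y)‖ := real_inner_le_norm _ _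
        have h3 : ‖(WithLp.equiv 2 (Fin n → ℝ)).symm (M *ᵥ y)‖ ≤ ‖M‖ * ‖yE‖ :=
          M.l2_opNorm_mulVec yE
        have h4 : y ⬝ᵥ y = ‖yE‖ * ‖yE‖ := by
          rw [dot_eq_inner y y, ← hyE, real_inner_self_eq_norm_mul_norm]
        have h5 : ‖yE‖ * (‖M‖ * ‖yE‖) = ‖M‖ * (y ⬝ᵥ y) := by rw [h4]; ring
        calc y ⬝ᵥ (M *ᵥ y) ≤ ‖yE‖ * ‖(WithLp.equiv 2 (Fin n → ℝ)).symm (M *ᵥ y)‖ := by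
              rw [h1]; exact h2
          _ ≤ ‖yE‖ * (‖M‖ * ‖yE‖) :=
              mul_le_mul_of_nonneg_left h3 (norm_nonneg _)
          _ = ‖M‖ * (y ⬝ᵥ y) := h5
      -- combine
      have hkey : x ⬝ᵥ (M *ᵥ x) ≤ ε * c * (x ⬝ᵥ (A *ᵥ x)) := by
        have hMle : ‖M‖ ≤ ε * ‖A‖ := hnorm
        have hclam : ‖A‖ = c * lam := by
          rw [hcdef, div_mul_cancel₀]
          exact ne_of_gt hlam
        calc x ⬝ᵥ (M *ᵥ x) = y ⬝ᵥ (M *ᵥ y) := hxMx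
          _ ≤ ‖M‖ * (y ⬝ᵥ y) := hyMy
          _ ≤ (ε * ‖A‖) * (y ⬝ᵥ y) := mul_le_mul_of_nonneg_right hMle hyy_nonneg
          _ = (ε * c) * (lam * (y ⬝ᵥ y)) := by rw [hclam]; ring
          _ ≤ (ε * c) * (x ⬝ᵥ (A *ᵥ x)) :=
              mul_le_mul_of_nonneg_left hlamyy (by positivity)
      have hexp : x ⬝ᵥ ((B - (ρ - ε * c) • A) *ᵥ x) =
          (ρ * (x ⬝ᵥ (A *ᵥ x)) - x ⬝ᵥ (M *ᵥ x)) - (ρ - ε * c) * (x ⬝ᵥ (A *ᵥ x)) := by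
        rw [hMdef]
        rw [Matrix.sub_mulVec, Matrix.sub_mulVec, dotProduct_sub, dotProduct_sub,
          Matrix.smul_mulVec, Matrix.smul_mulVec, dotProduct_smul, dotProduct_smul]
        simp only [smul_eq_mul]
        ring
      rw [hexp]
      linarith
end

section
/- For the loop gain operator with Γ = I, every eigen-matrix of L corresponding to a nonzero eigenvalue is diagonal, and the nonzero eigenvalues of L are exactly the nonzero eigenvalues of the nonnegative matrix M^∘ = ∑_t M_t^{∘2}; in particular ρ(L) = ρ(M^∘) whenever ρ(L) > 0. -/
open Matrix

/-- Auxiliary: two sets of reals agreeing away from 0 have the same `⨆ ‖·‖₊`. -/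
lemma loopGain_sup_aux (S T : Set ℝ) (h : ∀ x : ℝ, x ≠ 0 → (x ∈ S ↔ x ∈ T)) :
    (⨆ k ∈ S, (‖k‖₊ : ENNReal)) = ⨆ k ∈ T, (‖k‖₊ : ENNReal) := by
  apply le_antisymm
  · refine iSup₂_le fun k hk => ?_
    rcases eq_or_ne k 0 with rfl | hk0
    · simp
    · exact le_iSup₂ (f := fun (k : ℝ) (_ : k ∈ T) => (‖k‖₊ : ENNReal)) k ((h k hk0).mp hk)
  · refine iSup₂_le fun k hk => ?_
    rcases eq_or_ne k 0 with rfl | hk0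
    · simp
    · exact le_iSup₂ (f := fun (k : ℝ) (_ : k ∈ S) => (‖k‖₊ : ENNReal)) k ((h k hk0).mpr hk)

/-- For the loop gain operator with Γ = I: every eigen-matrix for a nonzero eigenvalue is
    diagonal; the nonzero eigenvalues of L are exactly the nonzero eigenvalues of
    M^∘ = ∑_t M_t^{∘2}; and ρ(L) = ρ(M^∘) whenever ρ(L) > 0. -/
theorem loopGain_diag_eigen {n : ℕ}
    (M : ℕ → Matrix (Fin n) (Fin n) ℝ)
    (hH2 : Summable (fun t => (M t * (M t)ᵀ).trace))
    (L : Module.End ℝ (Matrix (Fin n) (Fin n) ℝ))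
    (hL : ∀ X : Matrix (Fin n) (Fin n) ℝ,
      L X = (1 : Matrix (Fin n) (Fin n) ℝ).hadamard (∑' t : ℕ, M t * X * (M t)ᵀ)) :
    (∀ (lam : ℝ) (X : Matrix (Fin n) (Fin n) ℝ), lam ≠ 0 → L X = lam • X →
        ∀ i j, i ≠ j → X i j = 0) ∧
    (∀ lam : ℝ, lam ≠ 0 →
      ((∃ X : Matrix (Fin n) (Fin n) ℝ, X ≠ 0 ∧ L X = lam • X) ↔
       (∃ v : Fin n → ℝ, v ≠ 0 ∧ (∑' t : ℕ, (M t).hadamard (M t)) *ᵥ v = lam • v))) ∧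
    (spectralRadius ℝ L ≠ 0 →
      spectralRadius ℝ L = spectralRadius ℝ (∑' t : ℕ, (M t).hadamard (M t))) := by
  classical
  -- rewrite the trace hypothesis as summability of squared entries
  have htr : ∀ t, (M t * (M t)ᵀ).trace = ∑ i, ∑ k, (M t i k) ^ 2 := by
    intro t; simp [Matrix.trace, Matrix.mul_apply, Matrix.diag, sq]
  have hsq : ∀ i j, Summable fun t => (M t i j) ^ 2 := by
    intro i j
    refine Summable.of_nonneg_of_le (fun t => sq_nonneg _) (fun t => ?_) hH2
    rw [htr t]
    calc (M t i j) ^ 2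
        ≤ ∑ k, (M t i k) ^ 2 :=
          Finset.single_le_sum (f := fun k => (M t i k) ^ 2)
            (fun k _ => sq_nonneg _) (Finset.mem_univ j)
      _ ≤ ∑ i', ∑ k, (M t i' k) ^ 2 :=
          Finset.single_le_sum (f := fun i' => ∑ k, (M t i' k) ^ 2)
            (fun i' _ => Finset.sum_nonneg fun k _ => sq_nonneg _) (Finset.mem_univ i)
  have hprod : ∀ i k j l, Summable fun t => M t i k * M t j l := by
    intro i k j l
    apply Summable.of_abs
    refine Summable.of_nonneg_of_le (fun t => abs_nonneg _) (fun t => ?_)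
      (((hsq i k).add (hsq j l)).div_const 2)
    rw [abs_mul]
    nlinarith [sq_nonneg (|M t i k| - |M t j l|), sq_abs (M t i k), sq_abs (M t j l),
      abs_nonneg (M t i k), abs_nonneg (M t j l)]
  -- summability of the matrix-valued series
  have hentry : ∀ (X : Matrix (Fin n) (Fin n) ℝ) (t : ℕ) (i j : Fin n),
      (M t * X * (M t)ᵀ) i j = ∑ l, ∑ k, X k l * (M t i k * M t j l) := by
    intro X t i j
    simp only [Matrix.mul_apply, Matrix.transpose_apply, Finset.sum_mul]
    exact Finset.sum_congr rfl fun l _ => Finset.sum_congr rfl fun k _ => by ring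
  have hXsum : ∀ X : Matrix (Fin n) (Fin n) ℝ, Summable fun t => M t * X * (M t)ᵀ := by
    intro X
    refine Pi.summable.mpr fun i => Pi.summable.mpr fun j => ?_
    have : Summable fun t => ∑ l, ∑ k, X k l * (M t i k * M t j l) :=
      summable_sum fun l _ => summable_sum fun k _ => (hprod i k j l).mul_left (X k l)
    exact this.congr fun t => (hentry X t i j).symm
  have htsum_entry : ∀ (X : Matrix (Fin n) (Fin n) ℝ) (i j : Fin n),
      (∑' t, M t * X * (M t)ᵀ) i j = ∑' t, (M t * X * (M t)ᵀ) i j := by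
    intro X i j
    exact (congrFun (tsum_apply (hXsum X)) j).trans (tsum_apply (Pi.summable.mp (hXsum X) i))
  -- entrywise description of L
  have hLdiag : ∀ (X : Matrix (Fin n) (Fin n) ℝ) (i j : Fin n),
      L X i j = if i = j then ∑' t, (M t * X * (M t)ᵀ) i j else 0 := by
    intro X i j
    rw [hL]
    by_cases h : i = j
    · simp [Matrix.hadamard_apply, Matrix.one_apply, h, htsum_entry X]
    · simp [Matrix.hadamard_apply, Matrix.one_apply, h]
  -- the matrix M∘
  set Mo : Matrix (Fin n) (Fin n) ℝ := ∑' t : ℕ, (M t).hadamard (M t) with hMo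
  have hHadSum : Summable fun t => (M t).hadamard (M t) := by
    refine Pi.summable.mpr fun i => Pi.summable.mpr fun j => ?_
    exact (hsq i j).congr fun t => by simp [Matrix.hadamard_apply, sq]
  have hMoApp : ∀ i k, Mo i k = ∑' t, (M t i k) ^ 2 := by
    intro i k
    rw [hMo]; refine (congrFun (tsum_apply hHadSum) k).trans ((tsum_apply (Pi.summable.mp hHadSum i)).trans ?_)
    exact tsum_congr fun t => by simp [Matrix.hadamard_apply, sq]
  -- key computation: L on diagonal matrices is M∘ acting on the diagonal vector
  have hKey : ∀ (v : Fin n → ℝ) (i : Fin n),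
      (∑' t, (M t * diagonal v * (M t)ᵀ) i i) = (Mo *ᵥ v) i := by
    intro v i
    have hterm : ∀ t, (M t * diagonal v * (M t)ᵀ) i i = ∑ k, (M t i k) ^ 2 * v k := by
      intro t
      simp only [Matrix.mul_apply, Matrix.transpose_apply, Matrix.diagonal_apply, mul_ite,
        mul_zero, Finset.sum_ite_eq, Finset.sum_ite_eq', Finset.mem_univ, if_true]
      exact Finset.sum_congr rfl fun k _ => by ring
    have hRHS : (Mo *ᵥ v) i = ∑ k, (∑' t, (M t i k) ^ 2) * v k := by
      simp [Matrix.mulVec, dotProduct, hMoApp]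
    rw [hRHS]
    have : ∀ k : Fin n, (∑' t, (M t i k) ^ 2) * v k = ∑' t, (M t i k) ^ 2 * v k := by
      intro k; exact (tsum_mul_right).symm
    simp_rw [this]
    rw [← Summable.tsum_finsetSum fun k _ => (hsq i k).mul_right (v k)]
    exact tsum_congr fun t => hterm t
  -- Part 1
  have part1 : ∀ (lam : ℝ) (X : Matrix (Fin n) (Fin n) ℝ), lam ≠ 0 → L X = lam • X →
      ∀ i j, i ≠ j → X i j = 0 := by
    intro lam X hlam hX i j hij
    have h := congrFun (congrFun hX i) j
    rw [hLdiag] at h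
    simp only [if_neg hij, Matrix.smul_apply, smul_eq_mul] at h
    exact (mul_eq_zero.mp h.symm).resolve_left hlam
  -- Part 2
  have part2 : ∀ lam : ℝ, lam ≠ 0 →
      ((∃ X : Matrix (Fin n) (Fin n) ℝ, X ≠ 0 ∧ L X = lam • X) ↔
       (∃ v : Fin n → ℝ, v ≠ 0 ∧ Mo *ᵥ v = lam • v)) := by
    intro lam hlam
    constructor
    · rintro ⟨X, hX0, hX⟩
      refine ⟨fun i => X i i, ?_, ?_⟩
      · intro hv
        apply hX0
        ext i j
        by_cases h : i = j
        · subst h; exact congrFun hv i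
        · simp [part1 lam X hlam hX i j h]
      · have hXdiag : X = diagonal fun i => X i i := by
          ext i j
          by_cases h : i = j
          · subst h; simp
          · simp [Matrix.diagonal_apply_ne _ h, part1 lam X hlam hX i j h]
        funext i
        have h := congrFun (congrFun hX i) i
        rw [hLdiag] at h
        simp only [if_pos rfl, Matrix.smul_apply, smul_eq_mul] at h
        have := hKey (fun i => X i i) i
        rw [← hXdiag] at this
        rw [this] at h
        simpa using h
    · rintro ⟨v, hv0, hv⟩
      refine ⟨diagonal v, ?_, ?_⟩
      · intro h
        apply hv0
        funext i
        have := congrFun (congrFun h i) i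
        simpa using this
      · ext i j
        rw [hLdiag]
        by_cases h : i = j
        · subst h
          rw [if_pos rfl, hKey v i]
          have := congrFun hv i
          simpa using this
        · simp [h, Matrix.diagonal_apply_ne _ h]
  refine ⟨part1, part2, fun _ => ?_⟩
  -- Part 3: spectral radii agree
  have hspec : ∀ lam : ℝ, lam ≠ 0 → (lam ∈ spectrum ℝ L ↔ lam ∈ spectrum ℝ Mo) := by
    intro lam hlam
    have hLspec : lam ∈ spectrum ℝ L ↔ ∃ X, X ≠ 0 ∧ L X = lam • X := by
      rw [← Module.End.hasEigenvalue_iff_mem_spectrum,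
        Module.End.hasEigenvalue_iff, Submodule.ne_bot_iff]
      simp only [Module.End.mem_eigenspace_iff]
      tauto
    have hMspec : lam ∈ spectrum ℝ Mo ↔ ∃ v : Fin n → ℝ, v ≠ 0 ∧ Mo *ᵥ v = lam • v := by
      rw [← AlgEquiv.spectrum_eq (Matrix.toLinAlgEquiv' (R := ℝ) (n := Fin n)) Mo,
        ← Module.End.hasEigenvalue_iff_mem_spectrum,
        Module.End.hasEigenvalue_iff, Submodule.ne_bot_iff]
      simp only [Module.End.mem_eigenspace_iff, Matrix.toLinAlgEquiv'_apply]
      tauto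
    rw [hLspec, hMspec]
    exact part2 lam hlam
  exact loopGain_sup_aux (spectrum ℝ L) (spectrum ℝ Mo) hspec
end
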